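/- Let N ≥ 1, α, β ∈ ℝ, ε > 0, and let a ∈ ℝ^N satisfy the splay condition Σ_{j=1}^N exp(2 i a_j) = 0. Set Ω = (1/2) cos(α − β). Then φ_i(t) = Ω t + a_i and the constant coupling weights κ_ij = −sin(a_i − a_j + β) satisfy, for all t ∈ ℝ and all i, j, the equations dφ_i/dt = −(1/N) Σ_{j=1}^N κ_ij sin(φ_i(t) − φ_j(t) + α) and dκ_ij/dt = −ε (sin(φ_i(t) − φ_j(t) + β) + κ_ij). -/

import Mathlib

open Real

/-- One-cluster states of splay type are solutions of the adaptive phase-oscillator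
network, with collective frequency `Ω = (1/2) cos(α − β)`. -/
theorem one_cluster_splay_solution
    (N : ℕ) (hN : 1 ≤ N) (α β ε : ℝ) (hε : 0 < ε)
    (a : Fin N → ℝ)
    (hsplay : ∑ j, Complex.exp (2 * Complex.I * (a j : ℂ)) = 0)
    (Ω : ℝ) (hΩ : Ω = (1 / 2) * Real.cos (α - β))
    (φ : Fin N → ℝ → ℝ) (κ : Fin N → Fin N → ℝ)
    (hφ : ∀ i t, φ i t = Ω * t + a i)
    (hκ : ∀ i j, κ i j = - Real.sin (a i - a j + β)) :
    (∀ i t, HasDerivAt (φ i)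
      (-(1 / (N : ℝ)) * ∑ j, κ i j * Real.sin (φ i t - φ j t + α)) t) ∧
    (∀ i j t, HasDerivAt (fun _ : ℝ => κ i j)
      (-ε * (Real.sin (φ i t - φ j t + β) + κ i j)) t) := by
  have hNpos : (0:ℝ) < (N:ℝ) := by exact_mod_cast hN
  -- real and imaginary parts of the splay condition
  have hterm : ∀ x : ℝ, Complex.exp (2 * Complex.I * (x:ℂ)) =
      (Real.cos (2*x) : ℂ) + (Real.sin (2*x) : ℂ) * Complex.I := by
    intro x
    rw [show (2 * Complex.I * (x:ℂ)) = ((2*x : ℝ) : ℂ) * Complex.I by push_cast; ring,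
      Complex.exp_mul_I, Complex.ofReal_cos, Complex.ofReal_sin]
  have hsum : ((∑ j, Real.cos (2 * a j) : ℝ) : ℂ)
      + ((∑ j, Real.sin (2 * a j) : ℝ) : ℂ) * Complex.I = 0 := by
    rw [← hsplay, Complex.ofReal_sum, Complex.ofReal_sum, Finset.sum_mul,
      ← Finset.sum_add_distrib]
    exact Finset.sum_congr rfl fun j _ => (hterm (a j)).symm
  have hc : ∑ j, Real.cos (2 * a j) = 0 := by
    have := congrArg Complex.re hsum
    simpa only [Complex.add_re, Complex.ofReal_re, Complex.mul_re, Complex.ofReal_im,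
      Complex.I_re, Complex.I_im, mul_zero, mul_one, zero_mul, sub_zero, add_zero,
      Complex.zero_re] using this
  have hs : ∑ j, Real.sin (2 * a j) = 0 := by
    have := congrArg Complex.im hsum
    simpa only [Complex.add_im, Complex.ofReal_im, Complex.mul_im, Complex.ofReal_re,
      Complex.I_re, Complex.I_im, mul_zero, mul_one, zero_mul, add_zero, zero_add,
      Complex.zero_im] using this
  constructor
  · intro i t
    have key : -(1 / (N : ℝ)) * ∑ j, κ i j * Real.sin (φ i t - φ j t + α) = Ω := by
      have hsum2 : ∑ j, κ i j * Real.sin (φ i t - φ j t + α)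
          = ∑ j, ((1/2) * ((Real.cos (2 * a i + (α + β))) * Real.cos (2 * a j)
              + (Real.sin (2 * a i + (α + β))) * Real.sin (2 * a j))
              - (1/2) * Real.cos (α - β)) := by
        refine Finset.sum_congr rfl fun j _ => ?_
        rw [hκ, hφ, hφ]
        have h1 : Ω * t + a i - (Ω * t + a j) + α = a i - a j + α := by ring
        rw [h1]
        have := Real.cos_sub (2 * a i + (α + β)) (2 * a j)
        rw [show 2 * a i + (α + β) - 2 * a j = (a i - a j + β) + (a i - a j + α) by ring] at this
        rw [Real.cos_add (a i - a j + β) (a i - a j + α)] at this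
        have h2 := Real.cos_sub (a i - a j + β) (a i - a j + α)
        rw [show a i - a j + β - (a i - a j + α) = β - α by ring] at h2
        have h3 : Real.cos (β - α) = Real.cos (α - β) := by
          rw [show β - α = -(α - β) by ring, Real.cos_neg]
        nlinarith [this, h2, h3]
      rw [hsum2, Finset.sum_sub_distrib]
      rw [← Finset.mul_sum, Finset.sum_add_distrib, ← Finset.mul_sum, ← Finset.mul_sum,
        hc, hs]
      simp only [mul_zero, add_zero, Finset.sum_const, Finset.card_univ, Fintype.card_fin,
        nsmul_eq_mul]
      rw [hΩ]
      field_simp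
      ring
    rw [key]
    have hfe : φ i = fun s => Ω * s + a i := funext (hφ i)
    rw [hfe]
    simpa using ((hasDerivAt_id t).const_mul Ω).add_const (a i)
  · intro i j t
    have : -ε * (Real.sin (φ i t - φ j t + β) + κ i j) = 0 := by
      rw [hκ, hφ, hφ, show Ω * t + a i - (Ω * t + a j) + β = a i - a j + β by ring]
      ring
    rw [this]
    exact hasDerivAt_const t _
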